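/- arXiv:2102.07301 — 3 statements merged into one kernel-verified Lean document; each statement's English description precedes it below -/
import Mathlib

section
/- If $0 \le \delta' \le 1/2$ and $0 \le \epsilon' \le 1 - 2\delta'$, then $\delta'\log\frac{\delta'}{\delta'+\epsilon'} + (1-\delta')\log\frac{1-\delta'}{1-\delta'-\epsilon'} \le \frac{2(\epsilon')^2}{\delta'}$. -/
theorem stmt_0 (δ' ε' : ℝ)
    (hδ0 : 0 < δ') (hδ : δ' ≤ 1/2)
    (hε0 : 0 ≤ ε') (hε : ε' ≤ 1 - 2*δ')
    (hpos1 : 0 < δ' + ε') (hpos2 : 0 < 1 - δ' - ε') :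
    δ' * Real.log (δ' / (δ' + ε')) + (1 - δ') * Real.log ((1 - δ') / (1 - δ' - ε'))
      ≤ 2 * ε'^2 / δ' := by
  have h1δ : (0:ℝ) < 1 - δ' := by linarith
  have h1 : Real.log (δ' / (δ' + ε')) ≤ δ' / (δ' + ε') - 1 :=
    Real.log_le_sub_one_of_pos (by positivity)
  have h2 : Real.log ((1 - δ') / (1 - δ' - ε')) ≤ (1 - δ') / (1 - δ' - ε') - 1 :=
    Real.log_le_sub_one_of_pos (by positivity)
  have key : δ' * (δ' / (δ' + ε') - 1) + (1 - δ') * ((1 - δ') / (1 - δ' - ε') - 1)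
      = ε'^2 / ((δ' + ε') * (1 - δ' - ε')) := by
    field_simp
    ring
  have step : δ' * Real.log (δ' / (δ' + ε')) + (1 - δ') * Real.log ((1 - δ') / (1 - δ' - ε'))
      ≤ ε'^2 / ((δ' + ε') * (1 - δ' - ε')) := by
    rw [← key]
    have := mul_le_mul_of_nonneg_left h1 hδ0.le
    have := mul_le_mul_of_nonneg_left h2 h1δ.le
    linarith
  refine step.trans ?_
  rw [div_le_div_iff₀ (by positivity) hδ0]
  have h12 : (0:ℝ) ≤ 1 - 2*δ' := by linarith
  have h3 : (0:ℝ) ≤ 1 - 2*δ' - ε' := by linarith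
  nlinarith [mul_nonneg (sq_nonneg ε') (mul_nonneg hδ0.le h12),
    mul_nonneg (sq_nonneg ε') (mul_nonneg hε0 h3)]
end

section
/- The KL divergence between two Bernoulli distributions with parameters $p = \delta + \langle \theta', a\rangle$ and $q = \delta + \langle \theta, a\rangle$, where $\theta, \theta' \in \{-\Delta/(d-1), \Delta/(d-1)\}^{d-1}$ differ in exactly one coordinate and $a \in \{-1,1\}^{d-1}$, satisfies $\mathrm{KL}(p\|q) \le \frac{16\Delta^2}{(d-1)^2 \delta}$, provided $4\Delta < \delta \le 1/3$. -/
set_option maxHeartbeats 1600000 in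
/-- KL divergence bound between two Bernoulli distributions in the hard instance. -/
theorem stmt_2 (d : ℕ) (hd : 2 ≤ d) (δ Δ : ℝ) (hΔ : 0 < Δ)
    (hδ : 4 * Δ < δ) (hδ1 : δ ≤ 1/3)
    (θ θ' : Fin (d-1) → ℝ) (a : Fin (d-1) → ℝ)
    (hθ : ∀ i, θ i = Δ/(d-1) ∨ θ i = -(Δ/(d-1)))
    (hθ' : ∀ i, θ' i = Δ/(d-1) ∨ θ' i = -(Δ/(d-1)))
    (ha : ∀ i, a i = 1 ∨ a i = -1)
    (hdiff : ∃ j, θ' j ≠ θ j ∧ ∀ i, i ≠ j → θ' i = θ i)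
    (p q : ℝ)
    (hp : p = δ + ∑ i, θ' i * a i) (hq : q = δ + ∑ i, θ i * a i) :
    p * Real.log (p / q) + (1 - p) * Real.log ((1 - p) / (1 - q))
      ≤ 16 * Δ^2 / ((d-1)^2 * δ) := by
  obtain ⟨j, hj, hjeq⟩ := hdiff
  have hD1 : (1:ℝ) ≤ (d:ℝ) - 1 := by
    have : (2:ℝ) ≤ (d:ℝ) := by exact_mod_cast hd
    linarith
  have hD0 : (0:ℝ) < (d:ℝ) - 1 := by linarith
  have hc : 0 < Δ / ((d:ℝ) - 1) := div_pos hΔ hD0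
  have hcard : ((Finset.univ : Finset (Fin (d-1))).card : ℝ) = (d:ℝ) - 1 := by
    simp [Finset.card_univ]
    push_cast [Nat.cast_sub (by omega : 1 ≤ d)]
    ring
  -- bound on sums
  have habs : ∀ (f : Fin (d-1) → ℝ), (∀ i, f i = Δ/(d-1) ∨ f i = -(Δ/(d-1))) →
      |∑ i, f i * a i| ≤ Δ := by
    intro f hf
    calc |∑ i, f i * a i| ≤ ∑ i, |f i * a i| := Finset.abs_sum_le_sum_abs _ _
      _ = ∑ _i : Fin (d-1), Δ / ((d:ℝ)-1) := by
          apply Finset.sum_congr rfl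
          intro i _
          rcases hf i with h | h <;> rcases ha i with h' | h' <;>
            simp [h, h', abs_of_pos hc, abs_of_nonneg hc.le]
      _ = Δ := by
          rw [Finset.sum_const, nsmul_eq_mul, hcard]
          field_simp
  have hs' := habs θ' hθ'
  have hs := habs θ hθ
  rw [abs_le] at hs hs'
  have hΔδ : Δ < δ / 4 := by linarith
  have hq0 : 0 < q := by rw [hq]; linarith [hs.1]
  have hp0 : 0 < p := by rw [hp]; linarith [hs'.1]
  have hqlb : δ - Δ ≤ q := by rw [hq]; linarith [hs.1]
  have hqub : q ≤ δ + Δ := by rw [hq]; linarith [hs.2]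
  have hpub : p ≤ δ + Δ := by rw [hp]; linarith [hs'.2]
  have hq1 : q < 1 := by linarith
  have hp1 : p < 1 := by linarith
  -- p - q
  have hsub : p - q = (θ' j - θ j) * a j := by
    have h1 : p - q = ∑ i, (θ' i - θ i) * a i := by
      simp only [hp, hq, sub_mul, Finset.sum_sub_distrib]
      ring
    rw [h1, Finset.sum_eq_single j]
    · intro i _ hi; rw [hjeq i hi]; ring
    · intro h; exact absurd (Finset.mem_univ j) h
  have hpq2 : (p - q)^2 = 4 * Δ^2 / ((d:ℝ)-1)^2 := by
    have ha2 : (a j)^2 = 1 := by rcases ha j with h | h <;> rw [h] <;> norm_num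
    have hd2 : (θ' j - θ j)^2 = (2*Δ/((d:ℝ)-1))^2 := by
      rcases hθ' j with h1 | h1 <;> rcases hθ j with h2 | h2
      · exact absurd (h1.trans h2.symm) hj
      · rw [h1, h2]; ring
      · rw [h1, h2]; ring
      · exact absurd (h1.trans h2.symm) hj
    rw [hsub, mul_pow, ha2, hd2, mul_one]
    field_simp
    ring
  -- KL ≤ chi-square bound
  have hlog1 : Real.log (p/q) ≤ p/q - 1 :=
    Real.log_le_sub_one_of_pos (div_pos hp0 hq0)
  have hlog2 : Real.log ((1-p)/(1-q)) ≤ (1-p)/(1-q) - 1 :=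
    Real.log_le_sub_one_of_pos (div_pos (by linarith) (by linarith))
  have h1 : p * Real.log (p/q) ≤ p * (p/q - 1) :=
    mul_le_mul_of_nonneg_left hlog1 hp0.le
  have h2 : (1-p) * Real.log ((1-p)/(1-q)) ≤ (1-p) * ((1-p)/(1-q) - 1) :=
    mul_le_mul_of_nonneg_left hlog2 (by linarith)
  have heq : p * (p/q - 1) + (1-p) * ((1-p)/(1-q) - 1) = (p-q)^2 / (q*(1-q)) := by
    field_simp [hq0.ne', (show (1:ℝ) - q ≠ 0 by linarith)]
    ring
  have hKL : p * Real.log (p / q) + (1 - p) * Real.log ((1 - p) / (1 - q))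
      ≤ (p-q)^2 / (q*(1-q)) := by linarith
  have key : δ ≤ 4 * (q * (1-q)) := by
    nlinarith [mul_nonneg (show 0 ≤ q - 3*δ/4 by linarith) (show 0 ≤ 1 - q by linarith),
      mul_nonneg (show 0 ≤ δ by linarith) (show 0 ≤ 1 - q - 7/12 by linarith)]
  calc p * Real.log (p / q) + (1 - p) * Real.log ((1 - p) / (1 - q))
      ≤ (p-q)^2 / (q*(1-q)) := hKL
    _ = 4 * Δ^2 / ((d:ℝ)-1)^2 / (q*(1-q)) := by rw [hpq2]
    _ ≤ 16 * Δ^2 / (((d:ℝ)-1)^2 * δ) := by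
        rw [div_div, div_le_div_iff₀ (mul_pos (by positivity) (mul_pos hq0 (by linarith)))
          (mul_pos (by positivity) (by linarith : (0:ℝ) < δ))]
        nlinarith [mul_le_mul_of_nonneg_left key
          (show (0:ℝ) ≤ 4 * Δ^2 * ((d:ℝ)-1)^2 by positivity)]
end

section
/- Suppose $A, B \in \mathbb{R}^{d\times d}$ are positive definite with $A \succeq B$. Then for any $x \in \mathbb{R}^d$, $\|x\|_A \le \|x\|_B \cdot \sqrt{\det(A)/\det(B)}$. -/
open Matrix

lemma quad_le_det_mul (d : ℕ) (M : Matrix (Fin d) (Fin d) ℝ)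
    (hM : M.PosSemidef) (h1 : (M - 1).PosSemidef) (y : Fin d → ℝ) :
    y ⬝ᵥ M *ᵥ y ≤ M.det * (y ⬝ᵥ y) := by
  classical
  have hH := hM.isHermitian
  set U : Matrix (Fin d) (Fin d) ℝ := (hH.eigenvectorUnitary : Matrix (Fin d) (Fin d) ℝ) with hU
  set μ : Fin d → ℝ := hH.eigenvalues with hμ
  set z : Fin d → ℝ := (star U) *ᵥ y with hz
  -- all eigenvalues ≥ 1
  have hnorm : ∀ i, (⇑(hH.eigenvectorBasis i) : Fin d → ℝ) ⬝ᵥ ⇑(hH.eigenvectorBasis i) = 1 := by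
    intro i
    have h := hH.eigenvectorBasis.orthonormal.1 i
    have : (inner ℝ (hH.eigenvectorBasis i) (hH.eigenvectorBasis i) : ℝ) = 1 := by
      rw [real_inner_self_eq_norm_sq, h]; norm_num
    rw [← this]
    rw [EuclideanSpace.inner_eq_star_dotProduct]
    simp [dotProduct, mul_comm]
  have hμ1 : ∀ i, 1 ≤ μ i := by
    intro i
    have h0 := h1.dotProduct_mulVec_nonneg (⇑(hH.eigenvectorBasis i))
    simp only [star_trivial, sub_mulVec, one_mulVec, dotProduct_sub,
      hH.mulVec_eigenvectorBasis, dotProduct_smul, RCLike.re_to_real] at h0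
    rw [hnorm i] at h0
    simp only [smul_eq_mul, mul_one] at h0
    linarith
  have hdet : M.det = ∏ i, μ i := by
    simpa using hH.det_eq_prod_eigenvalues
  have hstarU : star U = Uᵀ := by
    ext i j; simp [Matrix.conjTranspose_apply]
  have hUU : U * star U = 1 := by
    exact mem_unitaryGroup_iff.mp hH.eigenvectorUnitary.2
  have hzz : y ⬝ᵥ y = z ⬝ᵥ z := by
    rw [hz, dotProduct_mulVec, ← mulVec_transpose, hstarU, transpose_transpose,
      mulVec_mulVec, ← hstarU, hUU, one_mulVec]
  have hquad : y ⬝ᵥ M *ᵥ y = ∑ i, μ i * (z i * z i) := by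
    conv_lhs => rw [hH.spectral_theorem, Unitary.conjStarAlgAut_apply]
    rw [← mulVec_mulVec, ← mulVec_mulVec, dotProduct_mulVec, ← mulVec_transpose,
      ← hstarU, ← hz, dotProduct_mulVec _ (diagonal _)]
    simp [vecMul_diagonal, dotProduct, mul_comm, mul_assoc, mul_left_comm]
    rfl
  rw [hquad, hzz, dotProduct, Finset.mul_sum]
  apply Finset.sum_le_sum
  intro i _
  rw [hdet]
  have h : μ i ≤ ∏ j, μ j := by
    calc μ i = ∏ j, if j = i then μ i else 1 := by simp
    _ ≤ ∏ j, μ j := by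
        refine Finset.prod_le_prod (fun j _ => ?_) (fun j _ => ?_)
        · split <;> [linarith [hμ1 i]; norm_num]
        · split
          · next hji => rw [hji]
          · exact hμ1 j
  exact mul_le_mul_of_nonneg_right h (mul_self_nonneg _)

/-- Lemma 12 of Abbasi-Yadkori et al. 2011. -/
theorem stmt_14 (d : ℕ) (A B : Matrix (Fin d) (Fin d) ℝ)
    (hA : A.PosDef) (hB : B.PosDef) (hAB : (A - B).PosSemidef)
    (x : Fin d → ℝ) :
    Real.sqrt (x ⬝ᵥ A.mulVec x)
      ≤ Real.sqrt (x ⬝ᵥ B.mulVec x) * Real.sqrt (A.det / B.det) := by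
  classical
  have hBps := hB.posSemidef
  open scoped MatrixOrder in set S : Matrix (Fin d) (Fin d) ℝ := CFC.sqrt B with hSdef
  have hSps : S.PosSemidef := by open scoped MatrixOrder in exact nonneg_iff_posSemidef.mp (CFC.sqrt_nonneg B)
  have hSH : S.IsHermitian := hSps.isHermitian
  have hSS : S * S = B := by open scoped MatrixOrder in exact CFC.sqrt_mul_sqrt_self B (nonneg_iff_posSemidef.mpr hBps)
  have hdetS : S.det * S.det = B.det := by rw [← det_mul, hSS]
  have hdetSne : S.det ≠ 0 := by
    intro h
    rw [h, mul_zero] at hdetS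
    exact hB.det_pos.ne' hdetS.symm
  have hu : IsUnit S.det := isUnit_iff_ne_zero.mpr hdetSne
  have hinv : S⁻¹ * S = 1 := nonsing_inv_mul S hu
  have hinv' : S * S⁻¹ = 1 := mul_nonsing_inv S hu
  have hSiH : (S⁻¹).IsHermitian := hSH.inv
  have hSt : Sᵀ = S := by rw [← conjTranspose_eq_transpose_of_trivial, hSH.eq]
  have hSit : (S⁻¹)ᵀ = S⁻¹ := by rw [← conjTranspose_eq_transpose_of_trivial, hSiH.eq]
  set M : Matrix (Fin d) (Fin d) ℝ := S⁻¹ * A * S⁻¹ with hMdef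
  have hMps : M.PosSemidef := by
    have := hA.posSemidef.mul_mul_conjTranspose_same S⁻¹
    rwa [hSiH.eq] at this
  have hIBI : S⁻¹ * B * S⁻¹ = 1 := by
    rw [← hSS, ← mul_assoc, hinv, one_mul, hinv']
  have hM1 : (M - 1).PosSemidef := by
    have h := hAB.mul_mul_conjTranspose_same S⁻¹
    rw [hSiH.eq] at h
    have : S⁻¹ * (A - B) * S⁻¹ = M - 1 := by
      rw [hMdef, ← hIBI, mul_sub, sub_mul]
    rwa [this] at h
  have hdetM : M.det = A.det / B.det := by
    rw [hMdef, det_mul, det_mul, det_nonsing_inv, Ring.inverse_eq_inv']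
    field_simp [← hdetS]
    rw [← hdetS]; ring
  set y : Fin d → ℝ := S *ᵥ x with hy
  have hxB : x ⬝ᵥ B *ᵥ x = y ⬝ᵥ y := by
    rw [hy, dotProduct_mulVec y, ← mulVec_transpose, hSt, mulVec_mulVec, hSS, dotProduct_comm]
  have hxA : x ⬝ᵥ A *ᵥ x = y ⬝ᵥ M *ᵥ y := by
    rw [hMdef, hy, mulVec_mulVec, mul_assoc (S⁻¹ * A) S⁻¹ S, hinv, mul_one,
      dotProduct_mulVec (S *ᵥ x), ← vecMul_vecMul, ← mulVec_transpose S⁻¹ (S *ᵥ x), hSit,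
      mulVec_mulVec, hinv, one_mulVec, dotProduct_mulVec]
  have key := quad_le_det_mul d M hMps hM1 y
  rw [← hxA, ← hxB, hdetM] at key
  have hdd : 0 ≤ A.det / B.det := le_of_lt (div_pos hA.det_pos hB.det_pos)
  calc Real.sqrt (x ⬝ᵥ A.mulVec x) ≤ Real.sqrt (A.det / B.det * (x ⬝ᵥ B.mulVec x)) :=
        Real.sqrt_le_sqrt key
    _ = Real.sqrt (x ⬝ᵥ B.mulVec x) * Real.sqrt (A.det / B.det) := by
        rw [Real.sqrt_mul hdd, mul_comm]
end
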